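/- Under the hypotheses of the convergence theorem (scheduled stochastic gradient iteration with threshold λ > 0, stepsize ε > 0, conditional gradient mean ∇J(w_k) and covariance G, and ρ = max over eigenvalues λ̃ of E[xxᵀ] of (1 - ελ̃)² with ρ < 1), the iterates satisfy limsup_{N→∞} E[J(w_N)] ≤ J(w*) + (λ + ε² Tr(Σ_x G)) / (1 - ρ). -/

import Mathlib

open MeasureTheory Matrix Filter

lemma limsup_rec (a : ℕ → ℝ) (ρ c b : ℝ) (h0 : 0 ≤ ρ) (h1 : ρ < 1)
    (hrec : ∀ k, a (k + 1) ≤ ρ * a k + c) (hlb : ∀ k, b ≤ a k) :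
    Filter.limsup a Filter.atTop ≤ c / (1 - ρ) := by
  set L := c / (1 - ρ) with hL
  have h1' : (0:ℝ) < 1 - ρ := by linarith
  have hcL : c = L * (1 - ρ) := by rw [hL, div_mul_cancel₀ _ h1'.ne']
  set M := max 0 (a 0 - L) with hM
  have key : ∀ k, a k ≤ ρ ^ k * M + L := by
    intro k; induction k with
    | zero =>
      have : a 0 - L ≤ M := le_max_right _ _
      simpa using by linarith
    | succ k ih =>
      have h2 : ρ * a k ≤ ρ * (ρ ^ k * M + L) := mul_le_mul_of_nonneg_left ih h0
      have := hrec k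
      have : a (k + 1) ≤ ρ * (ρ ^ k * M + L) + c := by linarith
      calc a (k + 1) ≤ ρ * (ρ ^ k * M + L) + c := this
        _ = ρ ^ (k + 1) * M + L := by rw [hcL]; ring
  have hv : Filter.Tendsto (fun k => ρ ^ k * M + L) Filter.atTop (nhds L) := by
    have h := tendsto_pow_atTop_nhds_zero_of_lt_one h0 h1
    simpa using (h.mul_const M).add_const L
  refine le_trans (Filter.limsup_le_limsup (Filter.Eventually.of_forall key) ?_ ?_) ?_
  · exact Filter.isCoboundedUnder_le_of_le Filter.atTop (f := a) hlb
  · exact hv.isBoundedUnder_le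
  · exact le_of_eq hv.limsup_eq

lemma spec_bound {n : ℕ} {A : Matrix (Fin n) (Fin n) ℝ} (hA : A.IsHermitian)
    (hpsd : ∀ v : Fin n → ℝ, 0 ≤ v ⬝ᵥ (A *ᵥ v)) {ε ρ : ℝ}
    (hρ : ∀ i, (1 - ε * hA.eigenvalues i) ^ 2 ≤ ρ)
    (u : Fin n → ℝ) :
    (u - ε • (A *ᵥ u)) ⬝ᵥ (A *ᵥ (u - ε • (A *ᵥ u))) ≤ ρ * (u ⬝ᵥ (A *ᵥ u)) := by
  classical
  set V : Matrix (Fin n) (Fin n) ℝ := (hA.eigenvectorUnitary : Matrix (Fin n) (Fin n) ℝ) with hV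
  have hVU : V * star V = 1 := Matrix.mem_unitaryGroup_iff.mp hA.eigenvectorUnitary.2
  have hUV : star V * V = 1 := Matrix.mem_unitaryGroup_iff'.mp hA.eigenvectorUnitary.2
  set lam : Fin n → ℝ := hA.eigenvalues with hlam
  have hspec : A = V * diagonal lam * star V := by
    have := hA.spectral_theorem
    simpa using this
  set y : Fin n → ℝ := star V *ᵥ u with hy
  -- quadratic form of V * diagonal d * star V
  have hq : ∀ d : Fin n → ℝ, u ⬝ᵥ ((V * diagonal d * star V) *ᵥ u) = ∑ i, d i * y i ^ 2 := by
    intro d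
    have h1 : (V * diagonal d * star V) *ᵥ u = V *ᵥ (diagonal d *ᵥ y) := by
      rw [hy, ← mulVec_mulVec, ← mulVec_mulVec]
    rw [h1, dotProduct_mulVec]
    have h2 : u ᵥ* V = y := by
      rw [hy, ← mulVec_transpose, ← conjTranspose_eq_transpose_of_trivial, Matrix.star_eq_conjTranspose]
    rw [h2]
    simp only [dotProduct, mulVec_diagonal]
    exact Finset.sum_congr rfl fun i _ => by ring
  have hsq : A * A = V * diagonal (fun i => lam i ^ 2) * star V := by
    rw [hspec]
    calc (V * diagonal lam * star V) * (V * diagonal lam * star V)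
        = V * diagonal lam * (star V * V) * diagonal lam * star V := by
          simp only [Matrix.mul_assoc]
      _ = V * (diagonal lam * diagonal lam) * star V := by
          rw [hUV]; simp only [Matrix.mul_assoc, Matrix.one_mul]
      _ = V * diagonal (fun i => lam i ^ 2) * star V := by
          rw [diagonal_mul_diagonal]
          congr 1
          congr 1
          funext i
          ring
  have hcube : A * (A * A) = V * diagonal (fun i => lam i ^ 3) * star V := by
    rw [hsq, hspec]
    calc (V * diagonal lam * star V) * (V * diagonal (fun i => lam i ^ 2) * star V)
        = V * diagonal lam * (star V * V) * diagonal (fun i => lam i ^ 2) * star V := by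
          simp only [Matrix.mul_assoc]
      _ = V * (diagonal lam * diagonal (fun i => lam i ^ 2)) * star V := by
          rw [hUV]; simp only [Matrix.mul_assoc, Matrix.one_mul]
      _ = _ := by
          rw [diagonal_mul_diagonal]
          congr 2
          funext i
          ring
  -- symmetry of A as bilinear form
  have hAt : Aᵀ = A := by
    rw [← conjTranspose_eq_transpose_of_trivial]
    exact hA.eq
  have hsym : ∀ x z : Fin n → ℝ, (A *ᵥ x) ⬝ᵥ z = x ⬝ᵥ (A *ᵥ z) := by
    intro x z
    rw [dotProduct_comm, dotProduct_mulVec, ← mulVec_transpose, hAt, dotProduct_comm]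
  -- expand LHS
  have hexp : (u - ε • (A *ᵥ u)) ⬝ᵥ (A *ᵥ (u - ε • (A *ᵥ u)))
      = u ⬝ᵥ (A *ᵥ u) - 2 * ε * (u ⬝ᵥ ((A * A) *ᵥ u)) + ε ^ 2 * (u ⬝ᵥ ((A * (A * A)) *ᵥ u)) := by
    rw [mulVec_sub, mulVec_smul]
    rw [sub_dotProduct, dotProduct_sub, dotProduct_sub, smul_dotProduct, smul_dotProduct,
      dotProduct_smul, dotProduct_smul]
    have e1 : (A *ᵥ u) ⬝ᵥ (A *ᵥ u) = u ⬝ᵥ ((A * A) *ᵥ u) := by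
      rw [hsym, mulVec_mulVec]
    have e2 : (A *ᵥ u) ⬝ᵥ (A *ᵥ (A *ᵥ u)) = u ⬝ᵥ ((A * (A * A)) *ᵥ u) := by
      rw [hsym, mulVec_mulVec, mulVec_mulVec, ← Matrix.mul_assoc, Matrix.mul_assoc]
    have e3 : u ⬝ᵥ (A *ᵥ (A *ᵥ u)) = u ⬝ᵥ ((A * A) *ᵥ u) := by rw [mulVec_mulVec]
    simp only [smul_eq_mul]
    rw [e1, e2, e3]
    ring
  -- eigenvalues are nonnegative
  have hpos : ∀ i, 0 ≤ lam i := by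
    have hAps : A.PosSemidef := posSemidef_iff_dotProduct_mulVec.mpr ⟨hA, fun x => by simpa using hpsd x⟩
    exact fun i => hAps.eigenvalues_nonneg i
  rw [hexp]
  have q1 : u ⬝ᵥ (A *ᵥ u) = ∑ i, lam i * y i ^ 2 := by rw [hspec]; exact hq _
  have q2 : u ⬝ᵥ ((A * A) *ᵥ u) = ∑ i, lam i ^ 2 * y i ^ 2 := by rw [hsq]; exact hq _
  have q3 : u ⬝ᵥ ((A * (A * A)) *ᵥ u) = ∑ i, lam i ^ 3 * y i ^ 2 := by rw [hcube]; exact hq _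
  rw [q1, q2, q3, Finset.mul_sum, ← Finset.sum_sub_distrib]
  rw [Finset.mul_sum, Finset.mul_sum, ← Finset.sum_add_distrib]
  apply Finset.sum_le_sum
  intro i _
  have h1 : lam i * y i ^ 2 - 2 * ε * (lam i ^ 2 * y i ^ 2) + ε ^ 2 * (lam i ^ 3 * y i ^ 2)
      = ((1 - ε * lam i) ^ 2) * (lam i * y i ^ 2) := by ring
  rw [h1]
  have h2 : 0 ≤ lam i * y i ^ 2 := mul_nonneg (hpos i) (sq_nonneg _)
  calc ((1 - ε * lam i) ^ 2) * (lam i * y i ^ 2) ≤ ρ * (lam i * y i ^ 2) :=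
        mul_le_mul_of_nonneg_right (hρ i) h2
    _ = ρ * (lam i * y i ^ 2) := rfl

theorem stmt10 {n : ℕ} [NeZero n] (μ : Measure ((Fin n → ℝ) × ℝ)) [IsProbabilityMeasure μ]
    (hxx : ∀ i j : Fin n, Integrable (fun p => p.1 i * p.1 j) μ)
    (hxy : ∀ i : Fin n, Integrable (fun p => p.1 i * p.2) μ)
    (hyy : Integrable (fun p => p.2 ^ 2) μ)
    (J : (Fin n → ℝ) → ℝ)
    (hJ : ∀ w : Fin n → ℝ, J w = (1 / 2) * ∫ p, (p.2 - p.1 ⬝ᵥ w) ^ 2 ∂μ)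
    (Exx : Matrix (Fin n) (Fin n) ℝ)
    (hExx : ∀ i j, Exx i j = ∫ p, p.1 i * p.1 j ∂μ)
    (Exy : Fin n → ℝ)
    (hExy : ∀ i, Exy i = ∫ p, p.1 i * p.2 ∂μ)
    (Sx : Matrix (Fin n) (Fin n) ℝ) (hSx : Sx = (1 / 2 : ℝ) • Exx)
    (wstar : Fin n → ℝ) (hws : Exx *ᵥ wstar = Exy)
    {Ω : Type*} [MeasurableSpace Ω] (P : Measure Ω) [IsProbabilityMeasure P]
    (lam ε : ℝ) (hlam : 0 < lam) (hε : 0 < ε)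
    (w g : ℕ → Ω → Fin n → ℝ)
    (hwmeas : ∀ k, Measurable (w k))
    (w0 : Fin n → ℝ) (hw0 : ∀ ω, w 0 ω = w0)
    (G : Matrix (Fin n) (Fin n) ℝ)
    (hgi : ∀ k i, Integrable (fun ω => g k ω i) P)
    (hgij : ∀ k i j, Integrable (fun ω => g k ω i * g k ω j) P)
    (hwgi : ∀ k i j, Integrable (fun ω => w k ω i * g k ω j) P)
    (hJw : ∀ k, Integrable (fun ω => J (w k ω)) P)
    (hJwg : ∀ k, Integrable (fun ω => J (w k ω - ε • g k ω)) P)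
    (hmean : ∀ k i, P[(fun ω => g k ω i) | MeasurableSpace.comap (w k) inferInstance]
      =ᵐ[P] fun ω => (Exx *ᵥ w k ω - Exy) i)
    (hcov : ∀ k i j,
      P[(fun ω => (g k ω i - (Exx *ᵥ w k ω - Exy) i) * (g k ω j - (Exx *ᵥ w k ω - Exy) j)) |
          MeasurableSpace.comap (w k) inferInstance]
        =ᵐ[P] fun _ => G i j)
    (hstep : ∀ k ω, w (k + 1) ω =
      if J (w k ω - ε • g k ω) - J (w k ω) ≤ -lam then w k ω - ε • g k ω else w k ω)
    (hherm : Exx.IsHermitian)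
    (ρ : ℝ)
    (hρ : ρ = Finset.univ.sup' Finset.univ_nonempty
      fun i => (1 - ε * hherm.eigenvalues i) ^ 2)
    (hρ1 : ρ < 1) :
    Filter.limsup (fun N => ∫ ω, J (w N ω) ∂P) Filter.atTop
      ≤ J wstar + (lam + ε ^ 2 * (Sx * G).trace) / (1 - ρ) := by
  classical
  -- quadratic form of Exx as an integral
  have hAv : ∀ v : Fin n → ℝ, v ⬝ᵥ (Exx *ᵥ v) = ∫ p, (p.1 ⬝ᵥ v) ^ 2 ∂μ := by
    intro v
    have h1 : (fun p : (Fin n → ℝ) × ℝ => (p.1 ⬝ᵥ v) ^ 2)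
        = fun p => ∑ i, ∑ j, v i * v j * (p.1 i * p.1 j) := by
      funext p
      rw [sq, dotProduct, Finset.sum_mul_sum]
      exact Finset.sum_congr rfl fun i _ => Finset.sum_congr rfl fun j _ => by ring
    rw [h1, integral_finset_sum _ fun i _ =>
      integrable_finset_sum _ fun j _ => (hxx i j).const_mul _]
    have h2 : ∀ i ∈ Finset.univ, (∫ p, ∑ j, v i * v j * (p.1 i * p.1 j) ∂μ)
        = ∑ j, v i * v j * Exx i j := by
      intro i _
      rw [integral_finset_sum _ fun j _ => (hxx i j).const_mul _]
      exact Finset.sum_congr rfl fun j _ => by rw [integral_const_mul, hExx]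
    rw [Finset.sum_congr rfl h2]
    simp only [dotProduct, mulVec, Finset.mul_sum]
    exact Finset.sum_congr rfl fun i _ => Finset.sum_congr rfl fun j _ => by ring
  have hpsd : ∀ v : Fin n → ℝ, 0 ≤ v ⬝ᵥ (Exx *ᵥ v) := by
    intro v
    rw [hAv]
    exact integral_nonneg fun p => sq_nonneg _
  -- J as explicit quadratic
  have hJq : ∀ v : Fin n → ℝ, J v
      = (1 / 2) * (∫ p, p.2 ^ 2 ∂μ) - Exy ⬝ᵥ v + (1 / 2) * (v ⬝ᵥ (Exx *ᵥ v)) := by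
    intro v
    have Iys : Integrable (fun p : (Fin n → ℝ) × ℝ => p.2 * (p.1 ⬝ᵥ v)) μ := by
      have e : (fun p : (Fin n → ℝ) × ℝ => p.2 * (p.1 ⬝ᵥ v))
          = fun p => ∑ i, v i * (p.1 i * p.2) := by
        funext p
        rw [dotProduct, Finset.mul_sum]
        exact Finset.sum_congr rfl fun i _ => by ring
      rw [e]
      exact integrable_finset_sum _ fun i _ => (hxy i).const_mul _
    have hEyv : ∫ p, p.2 * (p.1 ⬝ᵥ v) ∂μ = Exy ⬝ᵥ v := by
      have e : (fun p : (Fin n → ℝ) × ℝ => p.2 * (p.1 ⬝ᵥ v))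
          = fun p => ∑ i, v i * (p.1 i * p.2) := by
        funext p
        rw [dotProduct, Finset.mul_sum]
        exact Finset.sum_congr rfl fun i _ => by ring
      rw [e, integral_finset_sum _ fun i _ => (hxy i).const_mul _]
      rw [dotProduct]
      exact Finset.sum_congr rfl fun i _ => by rw [integral_const_mul, hExy]; ring
    have Iss : Integrable (fun p : (Fin n → ℝ) × ℝ => (p.1 ⬝ᵥ v) ^ 2) μ := by
      have h1 : (fun p : (Fin n → ℝ) × ℝ => (p.1 ⬝ᵥ v) ^ 2)
          = fun p => ∑ i, ∑ j, v i * v j * (p.1 i * p.1 j) := by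
        funext p
        rw [sq, dotProduct, Finset.sum_mul_sum]
        exact Finset.sum_congr rfl fun i _ => Finset.sum_congr rfl fun j _ => by ring
      rw [h1]
      exact integrable_finset_sum _ fun i _ =>
        integrable_finset_sum _ fun j _ => (hxx i j).const_mul _
    have e2 : (fun p : (Fin n → ℝ) × ℝ => (p.2 - p.1 ⬝ᵥ v) ^ 2)
        = fun p => p.2 ^ 2 - 2 * (p.2 * (p.1 ⬝ᵥ v)) + (p.1 ⬝ᵥ v) ^ 2 := by
      funext p; ring
    have I1 : Integrable (fun p : (Fin n → ℝ) × ℝ => p.2 ^ 2 - 2 * (p.2 * (p.1 ⬝ᵥ v))) μ :=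
      hyy.sub (Iys.const_mul 2)
    rw [hJ, e2, integral_add I1 Iss, integral_sub hyy (Iys.const_mul 2),
      integral_const_mul, hEyv, hAv]
    ring
  -- symmetry of the quadratic form
  have hAt : Exxᵀ = Exx := by
    rw [← conjTranspose_eq_transpose_of_trivial]
    exact hherm.eq
  have hsymE : ∀ x z : Fin n → ℝ, (Exx *ᵥ x) ⬝ᵥ z = x ⬝ᵥ (Exx *ᵥ z) := by
    intro x z
    rw [dotProduct_comm, dotProduct_mulVec, ← mulVec_transpose, hAt, dotProduct_comm]
  -- J around the optimum
  have hJform : ∀ v : Fin n → ℝ,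
      J v = J wstar + (1 / 2) * ((v - wstar) ⬝ᵥ (Exx *ᵥ (v - wstar))) := by
    intro v
    rw [hJq v, hJq wstar]
    have e1 : (v - wstar) ⬝ᵥ (Exx *ᵥ (v - wstar))
        = v ⬝ᵥ (Exx *ᵥ v) - wstar ⬝ᵥ (Exx *ᵥ v) - (v ⬝ᵥ (Exx *ᵥ wstar) - wstar ⬝ᵥ (Exx *ᵥ wstar)) := by
      rw [mulVec_sub, dotProduct_sub, sub_dotProduct, sub_dotProduct]
    have e2 : wstar ⬝ᵥ (Exx *ᵥ v) = v ⬝ᵥ (Exx *ᵥ wstar) := by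
      rw [← hsymE, dotProduct_comm]
    have e3 : Exy ⬝ᵥ v = v ⬝ᵥ (Exx *ᵥ wstar) := by
      rw [← hws, dotProduct_comm]
    have e4 : Exy ⬝ᵥ wstar = wstar ⬝ᵥ (Exx *ᵥ wstar) := by
      rw [← hws, dotProduct_comm]
    rw [e1, e2, e3, e4]
    ring
  -- rho facts
  have hρi : ∀ i, (1 - ε * hherm.eigenvalues i) ^ 2 ≤ ρ := by
    intro i
    rw [hρ]
    exact Finset.le_sup' (fun i => (1 - ε * hherm.eigenvalues i) ^ 2) (Finset.mem_univ i)
  have hρ0 : 0 ≤ ρ := by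
    have i : Fin n := ⟨0, Nat.pos_of_ne_zero (NeZero.ne n)⟩
    exact (sq_nonneg _).trans (hρi i)
  -- symmetry of G
  have hGsym : ∀ i j, G i j = G j i := by
    intro i j
    have h1 := hcov 0 i j
    have h2 := hcov 0 j i
    have e : (fun ω => (g 0 ω j - (Exx *ᵥ w 0 ω - Exy) j) * (g 0 ω i - (Exx *ᵥ w 0 ω - Exy) i))
        = fun ω => (g 0 ω i - (Exx *ᵥ w 0 ω - Exy) i) * (g 0 ω j - (Exx *ᵥ w 0 ω - Exy) j) := by
      funext ω; ring
    rw [e] at h2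
    obtain ⟨ω, hω⟩ := (h1.symm.trans h2).exists
    exact hω
  -- integrability of the iterates
  have habs : ∀ k ω i, |w (k + 1) ω i| ≤ |w k ω i| + ε * |g k ω i| := by
    intro k ω i
    have h := congrFun (hstep k ω) i
    rw [apply_ite (fun v : Fin n → ℝ => v i)] at h
    rw [h]
    split_ifs with hc
    · have h0 : (w k ω - ε • g k ω) i = w k ω i - ε * g k ω i := rfl
      rw [h0, sub_eq_add_neg]
      refine (abs_add_le _ _).trans ?_
      rw [abs_neg, abs_mul, abs_of_pos hε]
    · have h0 : 0 ≤ ε * |g k ω i| := by positivity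
      linarith
  have hwint : ∀ k i, Integrable (fun ω => w k ω i) P := by
    intro k
    induction k with
    | zero => intro i; simp only [hw0]; exact integrable_const _
    | succ k ih =>
      intro i
      refine Integrable.mono' ((ih i).abs.add ((hgi k i).abs.const_mul ε))
        (((measurable_pi_apply i).comp (hwmeas (k + 1))).aestronglyMeasurable)
        (Filter.Eventually.of_forall fun ω => ?_)
      rw [Real.norm_eq_abs]
      exact habs k ω i
  have hwwi : ∀ k i j, Integrable (fun ω => w k ω i * w k ω j) P := by
    intro k
    induction k with
    | zero => intro i j; simp only [hw0]; exact integrable_const _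
    | succ k ih =>
      intro i j
      have hgw : Integrable (fun ω => |g k ω i * w k ω j|) P :=
        (((hwgi k j i)).congr (Filter.Eventually.of_forall fun ω => by rw [mul_comm])).abs
      have hB : Integrable
          (fun ω => (|w k ω i| + ε * |g k ω i|) * (|w k ω j| + ε * |g k ω j|)) P := by
        have e : (fun ω => (|w k ω i| + ε * |g k ω i|) * (|w k ω j| + ε * |g k ω j|))
            = fun ω => |w k ω i * w k ω j| + ε * |w k ω i * g k ω j|
              + ε * |g k ω i * w k ω j| + ε ^ 2 * |g k ω i * g k ω j| := by
          funext ω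
          rw [abs_mul, abs_mul, abs_mul, abs_mul]
          ring
        rw [e]
        exact (((ih i j).abs.add ((hwgi k i j).abs.const_mul ε)).add
          (hgw.const_mul ε)).add ((hgij k i j).abs.const_mul (ε ^ 2))
      refine Integrable.mono' hB
        ((((measurable_pi_apply i).comp (hwmeas (k + 1))).mul
          ((measurable_pi_apply j).comp (hwmeas (k + 1)))).aestronglyMeasurable)
        (Filter.Eventually.of_forall fun ω => ?_)
      rw [Real.norm_eq_abs, abs_mul]
      exact mul_le_mul (habs k ω i) (habs k ω j) (abs_nonneg _) (by positivity)
  -- conditional expectation facts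
  have hmle : ∀ k, MeasurableSpace.comap (w k) inferInstance ≤ (inferInstance : MeasurableSpace Ω) :=
    fun k => measurable_iff_comap_le.mp (hwmeas k)
  have hm'c : ∀ k (j : Fin n) (ω : Ω), (Exx *ᵥ w k ω - Exy) j = (∑ l, Exx j l * w k ω l) - Exy j := by
    intro k j ω
    simp [mulVec, dotProduct]
  have hm'int : ∀ k j, Integrable (fun ω => (Exx *ᵥ w k ω - Exy) j) P := by
    intro k j
    have e : (fun ω => (Exx *ᵥ w k ω - Exy) j) = fun ω => (∑ l, Exx j l * w k ω l) - Exy j :=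
      funext fun ω => hm'c k j ω
    rw [e]
    exact (integrable_finset_sum _ fun l _ => (hwint k l).const_mul _).sub (integrable_const _)
  have hwm' : ∀ k i j, Integrable (fun ω => w k ω i * (Exx *ᵥ w k ω - Exy) j) P := by
    intro k i j
    have e : (fun ω => w k ω i * (Exx *ᵥ w k ω - Exy) j)
        = fun ω => (∑ l, Exx j l * (w k ω i * w k ω l)) - Exy j * w k ω i := by
      funext ω
      rw [hm'c k j ω, mul_sub, Finset.mul_sum]
      congr 1
      · exact Finset.sum_congr rfl fun l _ => by ring
      · ring
    rw [e]
    exact (integrable_finset_sum _ fun l _ => (hwwi k i l).const_mul _).sub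
      ((hwint k i).const_mul _)
  have F1c : ∀ k j, ∫ ω, (g k ω j - (Exx *ᵥ w k ω - Exy) j) ∂P = 0 := by
    intro k j
    have h1 : ∫ ω, g k ω j ∂P = ∫ ω, (Exx *ᵥ w k ω - Exy) j ∂P := by
      rw [← integral_condExp (hmle k) (f := fun ω => g k ω j)]
      exact integral_congr_ae (hmean k j)
    rw [integral_sub (hgi k j) (hm'int k j), h1, sub_self]
  have F1w : ∀ k i j, ∫ ω, w k ω i * (g k ω j - (Exx *ᵥ w k ω - Exy) j) ∂P = 0 := by
    intro k i j
    have hmk : @Measurable Ω (Fin n → ℝ) (MeasurableSpace.comap (w k) inferInstance) _ (w k) :=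
      measurable_iff_comap_le.mpr le_rfl
    have hsm : StronglyMeasurable[MeasurableSpace.comap (w k) inferInstance]
        (fun ω => w k ω i) :=
      Measurable.stronglyMeasurable
        (show @Measurable Ω ℝ (MeasurableSpace.comap (w k) inferInstance) _ (fun ω => w k ω i)
          from (measurable_pi_apply i).comp hmk)
    have hpull := condExp_mul_of_stronglyMeasurable_left (μ := P) hsm
      (show Integrable ((fun ω => w k ω i) * fun ω => g k ω j) P from hwgi k i j) (hgi k j)
    have h1 : ∫ ω, w k ω i * g k ω j ∂P = ∫ ω, w k ω i * (Exx *ᵥ w k ω - Exy) j ∂P := by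
      have h2 : ∫ ω, w k ω i * g k ω j ∂P
          = ∫ ω, (P[(fun ω => w k ω i) * fun ω => g k ω j
              | MeasurableSpace.comap (w k) inferInstance]) ω ∂P := by
        rw [integral_condExp (hmle k)]
        rfl
      rw [h2, integral_congr_ae hpull]
      refine integral_congr_ae ?_
      filter_upwards [hmean k j] with ω hω
      simp only [Pi.mul_apply]
      rw [hω]
    have e : (fun ω => w k ω i * (g k ω j - (Exx *ᵥ w k ω - Exy) j))
        = fun ω => w k ω i * g k ω j - w k ω i * (Exx *ᵥ w k ω - Exy) j := by
      funext ω; ring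
    rw [e, integral_sub (hwgi k i j) (hwm' k i j), h1, sub_self]
  have F2 : ∀ k i j, ∫ ω,
      (g k ω i - (Exx *ᵥ w k ω - Exy) i) * (g k ω j - (Exx *ᵥ w k ω - Exy) j) ∂P = G i j := by
    intro k i j
    rw [← integral_condExp (hmle k), integral_congr_ae (hcov k i j), integral_const, probReal_univ]
    simp
  have hwh : ∀ k l j, Integrable (fun ω => w k ω l * (g k ω j - (Exx *ᵥ w k ω - Exy) j)) P := by
    intro k l j
    have e : (fun ω => w k ω l * (g k ω j - (Exx *ᵥ w k ω - Exy) j))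
        = fun ω => w k ω l * g k ω j - w k ω l * (Exx *ᵥ w k ω - Exy) j := by
      funext ω; ring
    rw [e]
    exact (hwgi k l j).sub (hwm' k l j)
  have Fz : ∀ k (c : ℝ) (d : Fin n → ℝ) j,
      ∫ ω, (c + ∑ l, d l * w k ω l) * (g k ω j - (Exx *ᵥ w k ω - Exy) j) ∂P = 0 := by
    intro k c d j
    have e : (fun ω => (c + ∑ l, d l * w k ω l) * (g k ω j - (Exx *ᵥ w k ω - Exy) j))
        = fun ω => c * (g k ω j - (Exx *ᵥ w k ω - Exy) j)
            + ∑ l, d l * (w k ω l * (g k ω j - (Exx *ᵥ w k ω - Exy) j)) := by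
      funext ω
      rw [add_mul, Finset.sum_mul]
      congr 1
      exact Finset.sum_congr rfl fun l _ => by ring
    have Ic : Integrable (fun ω => c * (g k ω j - (Exx *ᵥ w k ω - Exy) j)) P :=
      ((hgi k j).sub (hm'int k j)).const_mul c
    have Is : Integrable
        (fun ω => ∑ l, d l * (w k ω l * (g k ω j - (Exx *ᵥ w k ω - Exy) j))) P :=
      integrable_finset_sum _ fun l _ => (hwh k l j).const_mul _
    rw [e, integral_add Ic Is, integral_const_mul, F1c k j, mul_zero,
      integral_finset_sum _ fun l _ => (hwh k l j).const_mul _]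
    have hz : ∀ l ∈ Finset.univ, ∫ ω, d l * (w k ω l * (g k ω j - (Exx *ᵥ w k ω - Exy) j)) ∂P
        = 0 := by
      intro l _
      rw [integral_const_mul, F1w k l j, mul_zero]
    rw [Finset.sum_congr rfl hz]
    simp
  -- affine-in-w integrability
  have Iaffw : ∀ k (c : ℝ) (d : Fin n → ℝ) (c' : ℝ) (d' : Fin n → ℝ),
      Integrable (fun ω => (c + ∑ l, d l * w k ω l) * (c' + ∑ l, d' l * w k ω l)) P := by
    intro k c d c' d'
    have I1 : Integrable (fun ω => ∑ l, c * (d' l * w k ω l)) P :=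
      integrable_finset_sum _ fun l _ => ((hwint k l).const_mul _).const_mul _
    have I2 : Integrable (fun ω => ∑ l, c' * (d l * w k ω l)) P :=
      integrable_finset_sum _ fun l _ => ((hwint k l).const_mul _).const_mul _
    have I3 : Integrable (fun ω => ∑ l, ∑ m, (d l * d' m) * (w k ω l * w k ω m)) P :=
      integrable_finset_sum _ fun l _ => integrable_finset_sum _ fun m _ =>
        (hwwi k l m).const_mul _
    have e : (fun ω => (c + ∑ l, d l * w k ω l) * (c' + ∑ l, d' l * w k ω l))
        = fun ω => c * c' + ((∑ l, c * (d' l * w k ω l)) + (∑ l, c' * (d l * w k ω l))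
            + ∑ l, ∑ m, (d l * d' m) * (w k ω l * w k ω m)) := by
      funext ω
      have eSS : (∑ l, d l * w k ω l) * (∑ m, d' m * w k ω m)
          = ∑ l, ∑ m, (d l * d' m) * (w k ω l * w k ω m) := by
        rw [Finset.sum_mul_sum]
        exact Finset.sum_congr rfl fun l _ => Finset.sum_congr rfl fun m _ => by ring
      calc (c + ∑ l, d l * w k ω l) * (c' + ∑ l, d' l * w k ω l)
          = c * c' + (c * (∑ l, d' l * w k ω l) + c' * (∑ l, d l * w k ω l)
            + (∑ l, d l * w k ω l) * (∑ m, d' m * w k ω m)) := by ring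
        _ = _ := by rw [eSS, Finset.mul_sum, Finset.mul_sum]
    rw [e]
    exact (integrable_const _).add ((I1.add I2).add I3)
  have Iaffg : ∀ k (c : ℝ) (d : Fin n → ℝ) j,
      Integrable (fun ω => (c + ∑ l, d l * w k ω l) * g k ω j) P := by
    intro k c d j
    have e : (fun ω => (c + ∑ l, d l * w k ω l) * g k ω j)
        = fun ω => c * g k ω j + ∑ l, d l * (w k ω l * g k ω j) := by
      funext ω
      rw [add_mul, Finset.sum_mul]
      congr 1
      exact Finset.sum_congr rfl fun l _ => by ring
    rw [e]
    exact ((hgi k j).const_mul c).add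
      (integrable_finset_sum _ fun l _ => (hwgi k l j).const_mul _)
  have hm'aff : ∀ k (j : Fin n) ω, (Exx *ᵥ w k ω - Exy) j = (-Exy j) + ∑ l, Exx j l * w k ω l := by
    intro k j ω
    rw [hm'c k j ω]
    ring
  have hraff : ∀ k (i : Fin n) ω, (w k ω - wstar - ε • (Exx *ᵥ (w k ω - wstar))) i
      = (ε * (Exx *ᵥ wstar) i - wstar i)
        + ∑ l, ((if i = l then 1 else 0) - ε * Exx i l) * w k ω l := by
    intro k i ω
    have h1 : (w k ω - wstar - ε • (Exx *ᵥ (w k ω - wstar))) i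
        = w k ω i - wstar i - ε * (∑ l, Exx i l * (w k ω l - wstar l)) := by
      simp [mulVec, dotProduct]
    rw [h1]
    have h2 : ∑ l, ((if i = l then 1 else 0) - ε * Exx i l) * w k ω l
        = (∑ l, (if i = l then 1 else 0) * w k ω l) - ε * ∑ l, Exx i l * w k ω l := by
      rw [Finset.mul_sum, ← Finset.sum_sub_distrib]
      exact Finset.sum_congr rfl fun l _ => by ring
    rw [h2]
    have h3 : ∑ l, (if i = l then 1 else 0) * w k ω l = w k ω i := by
      simp [ite_mul]
    rw [h3]
    have h4 : (Exx *ᵥ wstar) i = ∑ l, Exx i l * wstar l := by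
      simp [mulVec, dotProduct]
    have h5 : ∑ l, Exx i l * (w k ω l - wstar l)
        = (∑ l, Exx i l * w k ω l) - ∑ l, Exx i l * wstar l := by
      rw [← Finset.sum_sub_distrib]
      exact Finset.sum_congr rfl fun l _ => by ring
    rw [h4, h5]
    ring
  have hdot : ∀ x z : Fin n → ℝ, x ⬝ᵥ (Exx *ᵥ z) = ∑ i, ∑ j, Exx i j * (x i * z j) := by
    intro x z
    simp only [dotProduct, mulVec]
    refine Finset.sum_congr rfl fun i _ => ?_
    rw [Finset.mul_sum]
    exact Finset.sum_congr rfl fun j _ => by ring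
  have hTr : ∑ i, ∑ j, Exx i j * G i j = 2 * (Sx * G).trace := by
    rw [hSx]
    simp only [Matrix.trace, Matrix.diag, Matrix.mul_apply, Matrix.smul_apply, smul_eq_mul]
    rw [Finset.mul_sum]
    refine Finset.sum_congr rfl fun i _ => ?_
    rw [Finset.mul_sum]
    refine Finset.sum_congr rfl fun j _ => ?_
    rw [hGsym i j]
    ring
  -- the one-step inequality
  have key : ∀ k, (∫ ω, J (w (k + 1) ω) ∂P)
      ≤ ρ * (∫ ω, J (w k ω) ∂P) + ((1 - ρ) * J wstar + (lam + ε ^ 2 * (Sx * G).trace)) := by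
    intro k
    have stepI : (∫ ω, J (w (k + 1) ω) ∂P) ≤ (∫ ω, J (w k ω - ε • g k ω) ∂P) + lam := by
      have hpt : ∀ ω, J (w (k + 1) ω) ≤ J (w k ω - ε • g k ω) + lam := by
        intro ω
        rw [hstep k ω]
        split_ifs with hc
        · linarith
        · push_neg at hc
          linarith
      calc (∫ ω, J (w (k + 1) ω) ∂P) ≤ ∫ ω, (J (w k ω - ε • g k ω) + lam) ∂P :=
            integral_mono (hJw (k + 1)) ((hJwg k).add (integrable_const _)) hpt
        _ = _ := by
            rw [integral_add (hJwg k) (integrable_const _), integral_const, probReal_univ, smul_eq_mul, one_mul]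
    have Iq1 : Integrable (fun ω => (w k ω - wstar) ⬝ᵥ (Exx *ᵥ (w k ω - wstar))) P := by
      have e : (fun ω => (w k ω - wstar) ⬝ᵥ (Exx *ᵥ (w k ω - wstar)))
          = fun ω => 2 * (J (w k ω) - J wstar) := by
        funext ω; rw [hJform (w k ω)]; ring
      rw [e]
      exact ((hJw k).sub (integrable_const _)).const_mul 2
    have HJk : ∫ ω, J (w k ω) ∂P
        = J wstar + (1 / 2) * ∫ ω, (w k ω - wstar) ⬝ᵥ (Exx *ᵥ (w k ω - wstar)) ∂P := by
      have e : ∫ ω, J (w k ω) ∂P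
          = ∫ ω, (J wstar + (1 / 2) * ((w k ω - wstar) ⬝ᵥ (Exx *ᵥ (w k ω - wstar)))) ∂P :=
        integral_congr_ae (Filter.Eventually.of_forall fun ω => hJform (w k ω))
      rw [e, integral_add (integrable_const _) (Iq1.const_mul _), integral_const, probReal_univ, smul_eq_mul, one_mul, integral_const_mul]
    have HJkg : ∫ ω, J (w k ω - ε • g k ω) ∂P
        = J wstar + (1 / 2) * ∫ ω, (w k ω - ε • g k ω - wstar) ⬝ᵥ
            (Exx *ᵥ (w k ω - ε • g k ω - wstar)) ∂P := by
      have Iq3 : Integrable (fun ω => (w k ω - ε • g k ω - wstar) ⬝ᵥ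
          (Exx *ᵥ (w k ω - ε • g k ω - wstar))) P := by
        have e : (fun ω => (w k ω - ε • g k ω - wstar) ⬝ᵥ (Exx *ᵥ (w k ω - ε • g k ω - wstar)))
            = fun ω => 2 * (J (w k ω - ε • g k ω) - J wstar) := by
          funext ω; rw [hJform (w k ω - ε • g k ω)]; ring
        rw [e]
        exact ((hJwg k).sub (integrable_const _)).const_mul 2
      have e : ∫ ω, J (w k ω - ε • g k ω) ∂P
          = ∫ ω, (J wstar + (1 / 2) * ((w k ω - ε • g k ω - wstar) ⬝ᵥ
              (Exx *ᵥ (w k ω - ε • g k ω - wstar)))) ∂P :=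
        integral_congr_ae (Filter.Eventually.of_forall fun ω => hJform (w k ω - ε • g k ω))
      rw [e, integral_add (integrable_const _) (Iq3.const_mul _), integral_const, probReal_univ, smul_eq_mul, one_mul, integral_const_mul]
    have hXc : ∀ (i : Fin n) ω, (w k ω - ε • g k ω - wstar) i
        = (w k ω - wstar - ε • (Exx *ᵥ (w k ω - wstar))) i
          - ε * (g k ω i - (Exx *ᵥ w k ω - Exy) i) := by
      intro i ω
      have h1 : (Exx *ᵥ (w k ω - wstar)) i = (Exx *ᵥ w k ω) i - (Exx *ᵥ wstar) i := by
        rw [mulVec_sub]; rfl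
      simp only [Pi.sub_apply, Pi.smul_apply, smul_eq_mul]
      rw [h1, show Exy i = (Exx *ᵥ wstar) i from (congrFun hws i).symm]
      ring
    have IRR : ∀ i j, Integrable (fun ω =>
        (w k ω - wstar - ε • (Exx *ᵥ (w k ω - wstar))) i
          * (w k ω - wstar - ε • (Exx *ᵥ (w k ω - wstar))) j) P := by
      intro i j
      have e : (fun ω => (w k ω - wstar - ε • (Exx *ᵥ (w k ω - wstar))) i
          * (w k ω - wstar - ε • (Exx *ᵥ (w k ω - wstar))) j)
          = fun ω => ((ε * (Exx *ᵥ wstar) i - wstar i)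
              + ∑ l, ((if i = l then 1 else 0) - ε * Exx i l) * w k ω l)
            * ((ε * (Exx *ᵥ wstar) j - wstar j)
              + ∑ l, ((if j = l then 1 else 0) - ε * Exx j l) * w k ω l) := by
        funext ω; rw [hraff k i ω, hraff k j ω]
      rw [e]
      exact Iaffw k _ _ _ _
    have IRH : ∀ i j, Integrable (fun ω =>
        (w k ω - wstar - ε • (Exx *ᵥ (w k ω - wstar))) i
          * (g k ω j - (Exx *ᵥ w k ω - Exy) j)) P := by
      intro i j
      have e : (fun ω => (w k ω - wstar - ε • (Exx *ᵥ (w k ω - wstar))) i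
            * (g k ω j - (Exx *ᵥ w k ω - Exy) j))
          = fun ω => ((ε * (Exx *ᵥ wstar) i - wstar i)
              + ∑ l, ((if i = l then 1 else 0) - ε * Exx i l) * w k ω l) * g k ω j
            - ((ε * (Exx *ᵥ wstar) i - wstar i)
              + ∑ l, ((if i = l then 1 else 0) - ε * Exx i l) * w k ω l)
              * ((-Exy j) + ∑ l, Exx j l * w k ω l) := by
        funext ω
        rw [hraff k i ω, ← hm'aff k j ω]
        ring
      rw [e]
      exact (Iaffg k _ _ _).sub (Iaffw k _ _ _ _)
    have IHH : ∀ i j, Integrable (fun ω =>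
        (g k ω i - (Exx *ᵥ w k ω - Exy) i) * (g k ω j - (Exx *ᵥ w k ω - Exy) j)) P := by
      intro i j
      have e : (fun ω => (g k ω i - (Exx *ᵥ w k ω - Exy) i)
            * (g k ω j - (Exx *ᵥ w k ω - Exy) j))
          = fun ω => g k ω i * g k ω j
            - ((-Exy j) + ∑ l, Exx j l * w k ω l) * g k ω i
            - (((-Exy i) + ∑ l, Exx i l * w k ω l) * g k ω j
              - ((-Exy i) + ∑ l, Exx i l * w k ω l) * ((-Exy j) + ∑ l, Exx j l * w k ω l)) := by
        funext ω
        rw [← hm'aff k i ω, ← hm'aff k j ω]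
        ring
      rw [e]
      exact ((hgij k i j).sub (Iaffg k _ _ _)).sub ((Iaffg k _ _ _).sub (Iaffw k _ _ _ _))
    have IXX : ∀ i j, Integrable (fun ω =>
        (w k ω - ε • g k ω - wstar) i * (w k ω - ε • g k ω - wstar) j) P := by
      intro i j
      have e : (fun ω => (w k ω - ε • g k ω - wstar) i * (w k ω - ε • g k ω - wstar) j)
          = fun ω =>
            (w k ω - wstar - ε • (Exx *ᵥ (w k ω - wstar))) i
              * (w k ω - wstar - ε • (Exx *ᵥ (w k ω - wstar))) j
            - ε * ((w k ω - wstar - ε • (Exx *ᵥ (w k ω - wstar))) i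
                * (g k ω j - (Exx *ᵥ w k ω - Exy) j))
            - (ε * ((w k ω - wstar - ε • (Exx *ᵥ (w k ω - wstar))) j
                * (g k ω i - (Exx *ᵥ w k ω - Exy) i))
              - ε ^ 2 * ((g k ω i - (Exx *ᵥ w k ω - Exy) i)
                * (g k ω j - (Exx *ᵥ w k ω - Exy) j))) := by
        funext ω
        rw [hXc i ω, hXc j ω]
        ring
      rw [e]
      exact ((IRR i j).sub ((IRH i j).const_mul ε)).sub
        (((IRH j i).const_mul ε).sub ((IHH i j).const_mul (ε ^ 2)))
    have ERH : ∀ i j, ∫ ω, (w k ω - wstar - ε • (Exx *ᵥ (w k ω - wstar))) i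
        * (g k ω j - (Exx *ᵥ w k ω - Exy) j) ∂P = 0 := by
      intro i j
      have e : (fun ω => (w k ω - wstar - ε • (Exx *ᵥ (w k ω - wstar))) i
            * (g k ω j - (Exx *ᵥ w k ω - Exy) j))
          = fun ω => ((ε * (Exx *ᵥ wstar) i - wstar i)
              + ∑ l, ((if i = l then 1 else 0) - ε * Exx i l) * w k ω l)
            * (g k ω j - (Exx *ᵥ w k ω - Exy) j) := by
        funext ω; rw [hraff k i ω]
      rw [e]
      exact Fz k _ _ j
    have EXX : ∀ i j, ∫ ω, (w k ω - ε • g k ω - wstar) i * (w k ω - ε • g k ω - wstar) j ∂P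
        = (∫ ω, (w k ω - wstar - ε • (Exx *ᵥ (w k ω - wstar))) i
            * (w k ω - wstar - ε • (Exx *ᵥ (w k ω - wstar))) j ∂P) + ε ^ 2 * G i j := by
      intro i j
      have e : (fun ω => (w k ω - ε • g k ω - wstar) i * (w k ω - ε • g k ω - wstar) j)
          = fun ω =>
            (w k ω - wstar - ε • (Exx *ᵥ (w k ω - wstar))) i
              * (w k ω - wstar - ε • (Exx *ᵥ (w k ω - wstar))) j
            - ε * ((w k ω - wstar - ε • (Exx *ᵥ (w k ω - wstar))) i
                * (g k ω j - (Exx *ᵥ w k ω - Exy) j))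
            - (ε * ((w k ω - wstar - ε • (Exx *ᵥ (w k ω - wstar))) j
                * (g k ω i - (Exx *ᵥ w k ω - Exy) i))
              - ε ^ 2 * ((g k ω i - (Exx *ᵥ w k ω - Exy) i)
                * (g k ω j - (Exx *ᵥ w k ω - Exy) j))) := by
        funext ω
        rw [hXc i ω, hXc j ω]
        ring
      have hI1 : Integrable (fun ω =>
          (w k ω - wstar - ε • (Exx *ᵥ (w k ω - wstar))) i
            * (w k ω - wstar - ε • (Exx *ᵥ (w k ω - wstar))) j
          - ε * ((w k ω - wstar - ε • (Exx *ᵥ (w k ω - wstar))) i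
              * (g k ω j - (Exx *ᵥ w k ω - Exy) j))) P :=
        (IRR i j).sub ((IRH i j).const_mul ε)
      have hI2 : Integrable (fun ω =>
          ε * ((w k ω - wstar - ε • (Exx *ᵥ (w k ω - wstar))) j
              * (g k ω i - (Exx *ᵥ w k ω - Exy) i))
          - ε ^ 2 * ((g k ω i - (Exx *ᵥ w k ω - Exy) i)
              * (g k ω j - (Exx *ᵥ w k ω - Exy) j))) P :=
        ((IRH j i).const_mul ε).sub ((IHH i j).const_mul (ε ^ 2))
      rw [e, integral_sub hI1 hI2,
        integral_sub (IRR i j) ((IRH i j).const_mul ε),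
        integral_sub ((IRH j i).const_mul ε) ((IHH i j).const_mul (ε ^ 2)),
        integral_const_mul, integral_const_mul, integral_const_mul,
        ERH i j, ERH j i, F2 k i j]
      ring
    have hq3sum : ∫ ω, (w k ω - ε • g k ω - wstar) ⬝ᵥ (Exx *ᵥ (w k ω - ε • g k ω - wstar)) ∂P
        = ∑ i, ∑ j, Exx i j *
            ∫ ω, (w k ω - ε • g k ω - wstar) i * (w k ω - ε • g k ω - wstar) j ∂P := by
      have e : (fun ω => (w k ω - ε • g k ω - wstar) ⬝ᵥ (Exx *ᵥ (w k ω - ε • g k ω - wstar)))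
          = fun ω => ∑ i, ∑ j, Exx i j
              * ((w k ω - ε • g k ω - wstar) i * (w k ω - ε • g k ω - wstar) j) :=
        funext fun ω => hdot _ _
      rw [e, integral_finset_sum _ fun i _ =>
        integrable_finset_sum _ fun j _ => (IXX i j).const_mul (Exx i j)]
      refine Finset.sum_congr rfl fun i _ => ?_
      rw [integral_finset_sum _ fun j _ => (IXX i j).const_mul (Exx i j)]
      exact Finset.sum_congr rfl fun j _ => by rw [integral_const_mul]
    have hq2sum : ∫ ω, (w k ω - wstar - ε • (Exx *ᵥ (w k ω - wstar))) ⬝ᵥ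
          (Exx *ᵥ (w k ω - wstar - ε • (Exx *ᵥ (w k ω - wstar)))) ∂P
        = ∑ i, ∑ j, Exx i j *
            ∫ ω, (w k ω - wstar - ε • (Exx *ᵥ (w k ω - wstar))) i
              * (w k ω - wstar - ε • (Exx *ᵥ (w k ω - wstar))) j ∂P := by
      have e : (fun ω => (w k ω - wstar - ε • (Exx *ᵥ (w k ω - wstar))) ⬝ᵥ
            (Exx *ᵥ (w k ω - wstar - ε • (Exx *ᵥ (w k ω - wstar)))))
          = fun ω => ∑ i, ∑ j, Exx i j
              * ((w k ω - wstar - ε • (Exx *ᵥ (w k ω - wstar))) i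
                * (w k ω - wstar - ε • (Exx *ᵥ (w k ω - wstar))) j) :=
        funext fun ω => hdot _ _
      rw [e, integral_finset_sum _ fun i _ =>
        integrable_finset_sum _ fun j _ => (IRR i j).const_mul (Exx i j)]
      refine Finset.sum_congr rfl fun i _ => ?_
      rw [integral_finset_sum _ fun j _ => (IRR i j).const_mul (Exx i j)]
      exact Finset.sum_congr rfl fun j _ => by rw [integral_const_mul]
    have Eq3 : (∫ ω, (w k ω - ε • g k ω - wstar) ⬝ᵥ (Exx *ᵥ (w k ω - ε • g k ω - wstar)) ∂P)
        = (∫ ω, (w k ω - wstar - ε • (Exx *ᵥ (w k ω - wstar))) ⬝ᵥ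
            (Exx *ᵥ (w k ω - wstar - ε • (Exx *ᵥ (w k ω - wstar)))) ∂P)
          + ε ^ 2 * (2 * (Sx * G).trace) := by
      rw [hq3sum, hq2sum, ← hTr, Finset.mul_sum, ← Finset.sum_add_distrib]
      refine Finset.sum_congr rfl fun i _ => ?_
      rw [Finset.mul_sum, ← Finset.sum_add_distrib]
      refine Finset.sum_congr rfl fun j _ => ?_
      rw [EXX i j]
      ring
    have Iq2 : Integrable (fun ω => (w k ω - wstar - ε • (Exx *ᵥ (w k ω - wstar))) ⬝ᵥ
        (Exx *ᵥ (w k ω - wstar - ε • (Exx *ᵥ (w k ω - wstar))))) P := by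
      have e : (fun ω => (w k ω - wstar - ε • (Exx *ᵥ (w k ω - wstar))) ⬝ᵥ
            (Exx *ᵥ (w k ω - wstar - ε • (Exx *ᵥ (w k ω - wstar)))))
          = fun ω => ∑ i, ∑ j, Exx i j
              * ((w k ω - wstar - ε • (Exx *ᵥ (w k ω - wstar))) i
                * (w k ω - wstar - ε • (Exx *ᵥ (w k ω - wstar))) j) :=
        funext fun ω => hdot _ _
      rw [e]
      exact integrable_finset_sum _ fun i _ =>
        integrable_finset_sum _ fun j _ => (IRR i j).const_mul _
    have stepIII : (∫ ω, (w k ω - wstar - ε • (Exx *ᵥ (w k ω - wstar))) ⬝ᵥ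
          (Exx *ᵥ (w k ω - wstar - ε • (Exx *ᵥ (w k ω - wstar)))) ∂P)
        ≤ ρ * ∫ ω, (w k ω - wstar) ⬝ᵥ (Exx *ᵥ (w k ω - wstar)) ∂P := by
      have hpt : ∀ ω, (w k ω - wstar - ε • (Exx *ᵥ (w k ω - wstar))) ⬝ᵥ
            (Exx *ᵥ (w k ω - wstar - ε • (Exx *ᵥ (w k ω - wstar))))
          ≤ ρ * ((w k ω - wstar) ⬝ᵥ (Exx *ᵥ (w k ω - wstar))) :=
        fun ω => spec_bound hherm hpsd hρi (w k ω - wstar)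
      calc (∫ ω, (w k ω - wstar - ε • (Exx *ᵥ (w k ω - wstar))) ⬝ᵥ
            (Exx *ᵥ (w k ω - wstar - ε • (Exx *ᵥ (w k ω - wstar)))) ∂P)
          ≤ ∫ ω, ρ * ((w k ω - wstar) ⬝ᵥ (Exx *ᵥ (w k ω - wstar))) ∂P :=
            integral_mono Iq2 (Iq1.const_mul ρ) hpt
        _ = _ := integral_const_mul ρ _
    have h6 : ρ * (∫ ω, J (w k ω) ∂P)
        = ρ * J wstar
          + (1 / 2) * (ρ * ∫ ω, (w k ω - wstar) ⬝ᵥ (Exx *ᵥ (w k ω - wstar)) ∂P) := by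
      rw [HJk]
      ring
    rw [HJkg] at stepI
    linarith [stepI, Eq3, stepIII, h6]
  -- conclusion
  have hlb : ∀ N, J wstar ≤ ∫ ω, J (w N ω) ∂P := by
    intro N
    have h1 : ∀ ω, J wstar ≤ J (w N ω) := by
      intro ω
      rw [hJform (w N ω)]
      have := hpsd (w N ω - wstar)
      linarith
    calc J wstar = ∫ _ω, J wstar ∂P := by
          rw [integral_const, probReal_univ, smul_eq_mul, one_mul]
      _ ≤ _ := integral_mono (integrable_const _) (hJw N) h1
  have hfin := limsup_rec (fun N => ∫ ω, J (w N ω) ∂P) ρ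
    ((1 - ρ) * J wstar + (lam + ε ^ 2 * (Sx * G).trace)) (J wstar) hρ0 hρ1 key hlb
  have hne : (1 : ℝ) - ρ ≠ 0 := by linarith
  have heq : ((1 - ρ) * J wstar + (lam + ε ^ 2 * (Sx * G).trace)) / (1 - ρ)
      = J wstar + (lam + ε ^ 2 * (Sx * G).trace) / (1 - ρ) := by
    field_simp
  rw [heq] at hfin
  exact hfin
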